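/- Let R be a 2-torsion free commutative ring with unity and let T_∞(R) be the algebra of upper triangular ℕ×ℕ matrices over R (functions f : ℕ×ℕ → R with f(i,j)=0 for i > j, under convolution). Then every commuting map θ on T_∞(R) is proper: θ(f) = λ·f + μ(f) for some λ ∈ R (acting as the scalar λ·1) and some R-linear map μ with values in the center of T_∞(R). -/
import Mathlib


variable {R : Type*} [CommRing R]

/-- Membership in `T_∞(R) = I(ℕ,R)`: upper triangular `ℕ × ℕ` matrices. -/
def IsInc (f : ℕ → ℕ → R) : Prop := ∀ x y : ℕ, ¬ x ≤ y → f x y = 0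

/-- The convolution product of `T_∞(R)`. -/
def conv (f g : ℕ → ℕ → R) : ℕ → ℕ → R :=
  fun x y => ∑ z ∈ Finset.Icc x y, f x z * g z y

/-- A central element of `T_∞(R)`. -/
def IsCentral (c : ℕ → ℕ → R) : Prop :=
  IsInc c ∧ ∀ f, IsInc f → conv c f = conv f c

/-- A commuting map on `T_∞(R)`. -/
structure IsCommMap (θ : (ℕ → ℕ → R) → ℕ → ℕ → R) : Prop where
  map_inc : ∀ f, IsInc f → IsInc (θ f)
  map_add : ∀ f g, IsInc f → IsInc g → θ (f + g) = θ f + θ g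
  map_smul : ∀ (r : R) (f), IsInc f → θ (r • f) = r • θ f
  comm : ∀ f, IsInc f → conv (θ f) f = conv f (θ f)

namespace TA

def Eu (i j : ℕ) : ℕ → ℕ → R := fun x y => if x = i ∧ y = j then 1 else 0

def one' : ℕ → ℕ → R := fun x y => if x = y then 1 else 0

lemma isInc_Eu {i j : ℕ} (h : i ≤ j) : IsInc (Eu i j : ℕ → ℕ → R) := by
  intro x y hxy
  simp only [Eu]
  rw [if_neg]
  rintro ⟨rfl, rfl⟩; exact hxy h

lemma conv_Eu_right {f : ℕ → ℕ → R} (hf : IsInc f) {i j : ℕ} (hij : i ≤ j) (x y : ℕ) :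
    conv f (Eu i j) x y = if y = j then f x i else 0 := by
  simp only [conv, Eu]
  have hs : ∀ z ∈ Finset.Icc x y, f x z * (if z = i ∧ y = j then (1:R) else 0)
      = if z = i then (if y = j then f x i else 0) else 0 := by
    intro z hz
    by_cases h1 : z = i <;> by_cases h2 : y = j <;> simp [h1, h2]
  rw [Finset.sum_congr rfl hs, Finset.sum_ite_eq' (Finset.Icc x y) i]
  by_cases hm : i ∈ Finset.Icc x y
  · rw [if_pos hm]
  · rw [if_neg hm]
    by_cases h2 : y = j
    · subst h2
      rw [if_pos rfl]
      simp only [Finset.mem_Icc, not_and_or, not_le] at hm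
      rcases hm with hm | hm
      · exact (hf x i (by omega)).symm
      · omega
    · rw [if_neg h2]

lemma conv_Eu_left {f : ℕ → ℕ → R} (hf : IsInc f) {i j : ℕ} (hij : i ≤ j) (x y : ℕ) :
    conv (Eu i j) f x y = if x = i then f j y else 0 := by
  simp only [conv, Eu]
  have hs : ∀ z ∈ Finset.Icc x y, (if x = i ∧ z = j then (1:R) else 0) * f z y
      = if z = j then (if x = i then f j y else 0) else 0 := by
    intro z hz
    by_cases h1 : z = j <;> by_cases h2 : x = i <;> simp [h1, h2]
  rw [Finset.sum_congr rfl hs, Finset.sum_ite_eq' (Finset.Icc x y) j]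
  by_cases hm : j ∈ Finset.Icc x y
  · rw [if_pos hm]
  · rw [if_neg hm]
    by_cases h2 : x = i
    · subst h2
      rw [if_pos rfl]
      simp only [Finset.mem_Icc, not_and_or, not_le] at hm
      rcases hm with hm | hm
      · omega
      · exact (hf j y (by omega)).symm
    · rw [if_neg h2]

lemma conv_one_right {f : ℕ → ℕ → R} (hf : IsInc f) : conv f one' = f := by
  funext x y
  simp only [conv, one']
  have hs : ∀ z ∈ Finset.Icc x y, f x z * (if z = y then (1:R) else 0)
      = if z = y then f x y else 0 := by
    intro z hz
    by_cases h1 : z = y <;> simp [h1]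
  rw [Finset.sum_congr rfl hs, Finset.sum_ite_eq' (Finset.Icc x y) y]
  by_cases hm : y ∈ Finset.Icc x y
  · rw [if_pos hm]
  · rw [if_neg hm]
    simp only [Finset.mem_Icc, not_and_or, not_le] at hm
    exact (hf x y (by omega)).symm

lemma conv_one_left {f : ℕ → ℕ → R} (hf : IsInc f) : conv one' f = f := by
  funext x y
  simp only [conv, one']
  have hs : ∀ z ∈ Finset.Icc x y, (if x = z then (1:R) else 0) * f z y
      = if z = x then f x y else 0 := by
    intro z hz
    by_cases h1 : z = x
    · subst h1; simp
    · rw [if_neg (fun h => h1 h.symm), if_neg h1, zero_mul]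
  rw [Finset.sum_congr rfl hs, Finset.sum_ite_eq' (Finset.Icc x y) x]
  by_cases hm : x ∈ Finset.Icc x y
  · rw [if_pos hm]
  · rw [if_neg hm]
    simp only [Finset.mem_Icc, not_and_or, not_le] at hm
    exact (hf x y (by omega)).symm

lemma conv_add_left (f g h : ℕ → ℕ → R) : conv (f + g) h = conv f h + conv g h := by
  funext x y
  simp [conv, add_mul, Finset.sum_add_distrib]

lemma conv_add_right (f g h : ℕ → ℕ → R) : conv f (g + h) = conv f g + conv f h := by
  funext x y
  simp [conv, mul_add, Finset.sum_add_distrib]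

lemma conv_smul_left (r : R) (f g : ℕ → ℕ → R) : conv (r • f) g = r • conv f g := by
  funext x y
  simp [conv, Finset.mul_sum, mul_assoc]

lemma conv_smul_right (r : R) (f g : ℕ → ℕ → R) : conv f (r • g) = r • conv f g := by
  funext x y
  simp [conv, Finset.mul_sum]
  ring_nf
  apply Finset.sum_congr rfl
  intro z hz; ring

lemma conv_sub_left (f g h : ℕ → ℕ → R) : conv (f - g) h = conv f h - conv g h := by
  funext x y
  simp [conv, sub_mul, Finset.sum_sub_distrib]

lemma conv_sub_right (f g h : ℕ → ℕ → R) : conv f (g - h) = conv f g - conv f h := by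
  funext x y
  simp [conv, mul_sub, Finset.sum_sub_distrib]

lemma isCentral_aux (r : R) : IsInc (r • one' : ℕ → ℕ → R) := by
  intro x y h
  simp only [Pi.smul_apply, one', smul_eq_mul]
  rw [if_neg (by omega), mul_zero]

end TA

namespace TA

lemma isCentral_smul_one (r : R) : IsCentral (r • one' : ℕ → ℕ → R) := by
  refine ⟨isCentral_aux r, fun f hf => ?_⟩
  rw [conv_smul_left, conv_smul_right, conv_one_left hf, conv_one_right hf]

variable (θ : (ℕ → ℕ → R) → ℕ → ℕ → R)

lemma rel (hθ : IsCommMap θ) (f g : ℕ → ℕ → R) (hf : IsInc f) (hg : IsInc g) :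
    conv (θ f) g + conv (θ g) f = conv f (θ g) + conv g (θ f) := by
  have hfg : IsInc (f + g) := by
    intro x y h; simp [Pi.add_apply, hf x y h, hg x y h]
  have h1 := hθ.comm (f + g) hfg
  rw [hθ.map_add f g hf hg, conv_add_left, conv_add_right, conv_add_right, conv_add_right,
      conv_add_left, conv_add_left] at h1
  have h2 := hθ.comm f hf
  have h3 := hθ.comm g hg
  linear_combination (norm := abel) h1 - h2 - h3

lemma key (hθ : IsCommMap θ) {i j k l : ℕ} (hij : i ≤ j) (hkl : k ≤ l) (x y : ℕ) :
    (if y = l then θ (Eu i j) x k else 0) + (if y = j then θ (Eu k l) x i else 0)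
    = (if x = i then θ (Eu k l) j y else 0) + (if x = k then θ (Eu i j) l y else 0) := by
  have hA := hθ.map_inc _ (isInc_Eu hij)
  have hB := hθ.map_inc _ (isInc_Eu hkl)
  have h := rel θ hθ (Eu i j) (Eu k l) (isInc_Eu hij) (isInc_Eu hkl)
  have h' := congrFun (congrFun h x) y
  simp only [Pi.add_apply] at h'
  rwa [conv_Eu_right hA hkl, conv_Eu_right hB hij, conv_Eu_left hB hij, conv_Eu_left hA hkl] at h'

lemma keySelf (hθ : IsCommMap θ) {i j : ℕ} (hij : i ≤ j) (x y : ℕ) :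
    (if y = j then θ (Eu i j) x i else 0) = (if x = i then θ (Eu i j) j y else 0) := by
  have hA := hθ.map_inc _ (isInc_Eu hij)
  have h := hθ.comm (Eu i j) (isInc_Eu hij)
  have h' := congrFun (congrFun h x) y
  rwa [conv_Eu_right hA hij, conv_Eu_left hA hij] at h'

/-- Off-diagonal entries of `θ (E i j)` vanish except possibly at `(i,j)`. -/
lemma offdiag (hθ : IsCommMap θ) {i j : ℕ} (hij : i ≤ j) {x y : ℕ} (hxy : x ≠ y)
    (hne : ¬(x = i ∧ y = j)) : θ (Eu i j) x y = 0 := by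
  by_cases hle : x ≤ y
  swap
  · exact hθ.map_inc _ (isInc_Eu hij) x y hle
  by_cases hyj : y = j
  · subst hyj
    have hxi : x ≠ i := fun h => hne ⟨h, rfl⟩
    -- key i j x x at (x, y)
    have h := key θ hθ hij (le_refl x) x y
    rw [if_neg (fun h' => hxy h'.symm), if_pos rfl, if_neg hxi, if_pos rfl, zero_add] at h
    -- h : θ (Eu x x) x i = 0 + θ (Eu i j) x y
    have h2 := keySelf θ hθ (le_refl x) x i
    rw [if_neg (fun h' : i = x => hxi h'.symm), if_pos rfl] at h2
    rw [← h2] at h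
    simpa using h.symm
  · -- y ≠ j : key i j y y at (x, y)
    have h := key θ hθ hij (le_refl y) x y
    rw [if_pos rfl, if_neg hyj, add_zero, if_neg hxy] at h
    have h2 := keySelf θ hθ (le_refl y) j y
    rw [if_pos rfl, if_neg (fun h' : j = y => hyj h'.symm)] at h2
    by_cases hxi : x = i
    · rw [if_pos hxi, h2] at h; simpa using h
    · rw [if_neg hxi] at h; simpa using h


/-- Diagonal entries of `θ (E i j)` (for `i < j`) are all equal. -/
lemma diag (hθ : IsCommMap θ) {i j : ℕ} (hij : i < j) (m : ℕ) :
    θ (Eu i j) m m = θ (Eu i j) j j := by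
  have hij' : i ≤ j := hij.le
  by_cases hmj : m = j
  · rw [hmj]
  by_cases hmi : m = i
  · subst hmi
    have h := keySelf θ hθ hij' m j
    rwa [if_pos rfl, if_pos rfl] at h
  -- m ∉ {i, j} : connect through l := max j m + 1
  set l := max j m + 1 with hl
  have hml : m ≤ l := by omega
  have hil : i ≤ l := by omega
  have hlj : l ≠ j := by omega
  have h1 : θ (Eu i j) m m = θ (Eu i j) l l := by
    have h := key θ hθ hij' hml m l
    rwa [if_pos rfl, if_neg hlj, add_zero, if_neg hmi, if_pos rfl, zero_add] at h
  have h2 : θ (Eu i j) i i = θ (Eu i j) l l := by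
    have h := key θ hθ hij' hil i l
    have hoff : θ (Eu i l) j l = 0 := by
      refine offdiag θ hθ hil (by omega) ?_
      rintro ⟨rfl, -⟩; omega
    rwa [if_pos rfl, if_neg hlj, add_zero, if_pos rfl, if_pos rfl, hoff, zero_add] at h
  have h3 : θ (Eu i j) i i = θ (Eu i j) j j := by
    have h := keySelf θ hθ hij' i j
    rwa [if_pos rfl, if_pos rfl] at h
  rw [h1, ← h2, h3]

/-- The scalar `λ`. -/
def lam : R := θ (Eu 0 1) 0 1

lemma lam_step (hθ : IsCommMap θ) {i j l : ℕ} (hij : i < j) (hjl : j < l) :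
    θ (Eu i j) i j = θ (Eu j l) j l := by
  have h := key θ hθ hij.le hjl.le i l
  rwa [if_pos rfl, if_neg (by omega : ¬ l = j), add_zero, if_pos rfl,
    if_neg (by omega : ¬ i = j), add_zero] at h

lemma lam_eq (hθ : IsCommMap θ) {i j : ℕ} (hij : i < j) : θ (Eu i j) i j = lam θ := by
  have aux : ∀ m : ℕ, θ (Eu m (m+1)) m (m+1) = lam θ := by
    intro m
    induction m with
    | zero => rfl
    | succ n ih =>
      rw [← lam_step θ hθ (by omega : n < n + 1) (by omega : n + 1 < n + 2)]
      exact ih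
  rw [lam_step θ hθ hij (by omega : j < j + 1)]
  exact aux j

/-- Structure of `θ` on matrix units. -/
lemma theta_Eu (hθ : IsCommMap θ) {i j : ℕ} (hij : i ≤ j) :
    ∃ c : R, θ (Eu i j) = lam θ • Eu i j + c • one' := by
  rcases lt_or_eq_of_le hij with hlt | rfl
  · refine ⟨θ (Eu i j) j j, ?_⟩
    funext x y
    simp only [Pi.add_apply, Pi.smul_apply, Eu, one', smul_eq_mul]
    by_cases hx : x = i ∧ y = j
    · obtain ⟨rfl, rfl⟩ := hx
      rw [if_pos ⟨rfl, rfl⟩, if_neg (by omega : ¬ x = y), mul_one, mul_zero, add_zero]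
      exact lam_eq θ hθ hlt
    · rw [if_neg hx, mul_zero, zero_add]
      by_cases hd : x = y
      · subst hd
        rw [if_pos rfl, mul_one]
        exact diag θ hθ hlt x
      · rw [if_neg hd, mul_zero]
        exact offdiag θ hθ hlt.le hd hx
  · -- diagonal unit case i = j (here j has been substituted by i)
    refine ⟨θ (Eu i i) i i - lam θ, ?_⟩
    have hdiag_gt : ∀ m : ℕ, i < m → θ (Eu i i) m m = θ (Eu i i) i i - lam θ := by
      intro m hm
      have h := key θ hθ (le_refl i) hm.le i m
      rw [if_pos rfl, if_neg (by omega : ¬ m = i), add_zero, if_pos rfl, if_pos rfl,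
        lam_eq θ hθ hm] at h
      linear_combination -h
    have hdiag_lt : ∀ m : ℕ, m < i → θ (Eu i i) m m = θ (Eu i i) i i - lam θ := by
      intro m hm
      have h := key θ hθ (le_refl i) hm.le m i
      rw [if_pos rfl, if_pos rfl, if_neg (by omega : ¬ m = i), zero_add, if_pos rfl,
        lam_eq θ hθ hm] at h
      linear_combination h
    have hoff : ∀ x y : ℕ, x ≠ y → θ (Eu i i) x y = 0 := by
      intro x y hxy
      by_cases hyi : y = i
      · subst hyi
        have h := keySelf θ hθ (le_refl y) x y
        rwa [if_pos rfl, if_neg hxy] at h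
      by_cases hxi : x = i
      · subst hxi
        have h := keySelf θ hθ (le_refl x) x y
        rw [if_neg hyi, if_pos rfl] at h
        exact h.symm
      · have h := key θ hθ (le_refl i) (le_refl y) x y
        rwa [if_pos rfl, if_neg hyi, add_zero, if_neg hxi, if_neg hxy, add_zero] at h
    funext x y
    simp only [Pi.add_apply, Pi.smul_apply, Eu, one', smul_eq_mul]
    by_cases hd : x = y
    · subst hd
      by_cases hxi : x = i
      · subst hxi
        rw [if_pos ⟨rfl, rfl⟩, if_pos rfl, mul_one, mul_one]
        ring
      · rw [if_neg (fun h => hxi h.1), if_pos rfl, mul_zero, zero_add, mul_one]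
        rcases lt_or_gt_of_ne hxi with h | h
        · exact hdiag_lt x h
        · exact hdiag_gt x h
    · rw [if_neg (fun h => hd (h.1.trans h.2.symm)), if_neg hd, mul_zero, mul_zero, add_zero]
      exact hoff x y hd


/-- `θ f - λ • f` commutes with every matrix unit. -/
lemma commutes_all (hθ : IsCommMap θ) (f : ℕ → ℕ → R) (hf : IsInc f) {i j : ℕ} (hij : i ≤ j) :
    conv (θ f - lam θ • f) (Eu i j) = conv (Eu i j) (θ f - lam θ • f) := by
  obtain ⟨c, hc⟩ := theta_Eu θ hθ hij
  have h := rel θ hθ f (Eu i j) hf (isInc_Eu hij)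
  rw [hc, conv_add_left, conv_add_right, conv_smul_left, conv_smul_right, conv_smul_left,
    conv_smul_right, conv_one_left hf, conv_one_right hf] at h
  rw [conv_sub_left, conv_sub_right, conv_smul_left, conv_smul_right]
  funext x y
  have h' := congrFun (congrFun h x) y
  simp only [Pi.add_apply, Pi.smul_apply, Pi.sub_apply, smul_eq_mul] at h' ⊢
  linear_combination h'

/-- An incidence element commuting with all matrix units is a scalar multiple of identity. -/
lemma eq_smul_one (g : ℕ → ℕ → R) (hg : IsInc g)
    (h : ∀ {i j : ℕ}, i ≤ j → conv g (Eu i j) = conv (Eu i j) g) :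
    g = g 0 0 • one' := by
  have key : ∀ i j : ℕ, i ≤ j → ∀ x y : ℕ,
      (if y = j then g x i else 0) = (if x = i then g j y else 0) := by
    intro i j hij x y
    have h' := congrFun (congrFun (h hij) x) y
    rwa [conv_Eu_right hg hij, conv_Eu_left hg hij] at h'
  funext x y
  simp only [Pi.smul_apply, one', smul_eq_mul]
  by_cases hd : x = y
  · subst hd
    rw [if_pos rfl, mul_one]
    rcases Nat.eq_zero_or_pos x with rfl | hx
    · rfl
    · have h' := key 0 x (Nat.zero_le x) 0 x
      rw [if_pos rfl, if_pos rfl] at h'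
      exact h'.symm
  · rw [if_neg hd, mul_zero]
    by_cases hle : x ≤ y
    · have h' := key y y (le_refl y) x y
      rwa [if_pos rfl, if_neg hd] at h'
    · exact hg x y hle

end TA

/-- for `R` `2`-torsion free, every commuting map `θ` on `T_∞(R)` is proper:
`θ(f) = λ • f + μ(f)` with `λ ∈ R` and `μ` `R`-linear with central values. -/
theorem Tinfty_commuting_proper (htf : ∀ a : R, a + a = 0 → a = 0)
    (θ : (ℕ → ℕ → R) → ℕ → ℕ → R) (hθ : IsCommMap θ) :
    ∃ (l : R) (μ : (ℕ → ℕ → R) → ℕ → ℕ → R),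
      (∀ f, IsInc f → IsCentral (μ f)) ∧
      (∀ f g, IsInc f → IsInc g → μ (f + g) = μ f + μ g) ∧
      (∀ (r : R) (f), IsInc f → μ (r • f) = r • μ f) ∧
      ∀ f, IsInc f → θ f = l • f + μ f := by
  refine ⟨TA.lam θ, fun f => θ f - TA.lam θ • f, ?_, ?_, ?_, ?_⟩
  · intro f hf
    dsimp only
    have hginc : IsInc (θ f - TA.lam θ • f) := by
      intro x y h
      simp [Pi.sub_apply, Pi.smul_apply, hθ.map_inc f hf x y h, hf x y h]
    rw [TA.eq_smul_one (θ f - TA.lam θ • f) hginc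
      (fun hij => TA.commutes_all θ hθ f hf hij)]
    exact TA.isCentral_smul_one _
  · intro f g hf hg
    dsimp only
    rw [hθ.map_add f g hf hg]
    funext x y
    simp only [Pi.add_apply, Pi.sub_apply, Pi.smul_apply, smul_eq_mul]
    ring
  · intro r f hf
    dsimp only
    rw [hθ.map_smul r f hf]
    funext x y
    simp only [Pi.sub_apply, Pi.smul_apply, smul_eq_mul]
    ring
  · intro f hf
    dsimp only
    funext x y
    simp only [Pi.add_apply, Pi.sub_apply, Pi.smul_apply, smul_eq_mul]
    ring
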